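/- arXiv:1401.1590 — 8 statements merged into one kernel-verified Lean document; each statement's English description precedes it below -/
import Mathlib

section
/- Let V : S → ℝ be monotone, s^r ∈ S and z^r ∈ ℝ. Define the feasible set 𝒱(s^r, z^r) = { V' : S → ℝ : V'(s^r) = z^r and V' is monotone }. Then Π_M(s^r, z^r, V) belongs to 𝒱(s^r, z^r), and for every V' ∈ 𝒱(s^r, z^r), ∑_{s∈S} (Π_M(s^r,z^r,V)(s) − V(s))² ≤ ∑_{s∈S} (V'(s) − V(s))²; that is, Π_M(s^r,z^r,V) minimizes the Euclidean distance to V over all monotone functions whose value at s^r equals z^r. -/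
open scoped Classical

/-- The monotonicity-preserving projection `Π_M(s^r, z^r, V)`: the value at the reference
point `s^r` is set to `z^r`, values at states above `s^r` are raised to at least `z^r`,
values at states below `s^r` are lowered to at most `z^r`, and all other values are kept. -/
noncomputable def projMono {S : Type} [PartialOrder S] (sr : S) (zr : ℝ) (V : S → ℝ) :
    S → ℝ :=
  fun s =>
    if s = sr then zr
    else if sr ≤ s then max zr (V s)
    else if s ≤ sr then min zr (V s)
    else V s

theorem projMono_mem_and_minimizes {S : Type} [Fintype S] [PartialOrder S]
    (V : S → ℝ) (hV : Monotone V) (sr : S) (zr : ℝ) :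
    (projMono sr zr V sr = zr ∧ Monotone (projMono sr zr V)) ∧
      ∀ V' : S → ℝ, V' sr = zr → Monotone V' →
        ∑ s : S, (projMono sr zr V s - V s) ^ 2 ≤ ∑ s : S, (V' s - V s) ^ 2 := by
  refine ⟨⟨by simp [projMono], ?_⟩, ?_⟩
  · intro a b hab
    have hVab := hV hab
    simp only [projMono]
    split_ifs with h1 h2 h3 h4 h5 h6 h7 h8 h9 h10 h11 h12 h13 h14 h15 h16 h17 h18 <;>
      subst_eqs <;>
      first
        | rfl
        | exact le_refl _
        | (exact absurd (le_antisymm hab ‹sr ≤ _›) ‹_ ≠ sr›)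
        | (exact absurd (le_trans hab ‹_ ≤ sr›) ‹¬ _ ≤ sr›)
        | (exact absurd (le_trans ‹sr ≤ _› hab) ‹¬ sr ≤ _›)
        | exact le_max_left _ _
        | exact min_le_left _ _
        | exact le_trans (min_le_left _ _) (le_max_left _ _)
        | exact max_le_max le_rfl hVab
        | exact min_le_min le_rfl hVab
        | exact le_trans (min_le_right _ _) hVab
        | exact le_trans hVab (le_max_right _ _)
        | exact hVab
        | exact absurd hab ‹¬ sr ≤ _›
        | exact absurd hab ‹¬ _ ≤ sr›
  · intro V' hV'r hV'
    apply Finset.sum_le_sum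
    intro s _
    simp only [projMono]
    split_ifs with h1 h2 h3
    · subst h1; rw [hV'r]
    · -- sr ≤ s : V' s ≥ zr
      have h : zr ≤ V' s := by rw [← hV'r]; exact hV' h2
      rcases le_total zr (V s) with hc | hc
      · rw [max_eq_right hc]; simp; positivity
      · rw [max_eq_left hc]
        nlinarith [sq_nonneg (V' s - zr)]
    · -- s ≤ sr : V' s ≤ zr
      have h : V' s ≤ zr := by rw [← hV'r]; exact hV' h3
      rcases le_total zr (V s) with hc | hc
      · rw [min_eq_left hc]
        clear h1 h2
        nlinarith [sq_nonneg (V' s - zr)]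
      · rw [min_eq_right hc]; simp; positivity
    · simp; positivity
end

section
/- Fix Vmax > 0 and define the bounding sequences U^0 = V* + Vmax·e, L^0 = V* − Vmax·e (where e is the all-ones value-function vector), and recursively U^{k+1} = (U^k + H U^k)/2 and L^{k+1} = (L^k + H L^k)/2. Then for every k ≥ 0, componentwise over all (t,s): H U^k ≤ U^{k+1} ≤ U^k and H L^k ≥ L^{k+1} ≥ L^k; moreover, for every t ∈ {0,…,T} and s ∈ S, U^k_t(s) → V*_t(s) and L^k_t(s) → V*_t(s) as k → ∞. -/
/-- The Bellman operator for a finite-horizon MDP: `(HV)_t(s) = max_a [C_t(s,a) +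
∑_{s'} p_t(s'|s,a) V_{t+1}(s')]` for `t < T` and `(HV)_T(s) = C_T(s)`. -/
noncomputable def bellman {S A : Type} [Fintype S] [Fintype A] [Nonempty A]
    (T : ℕ) (C : ℕ → S → A → ℝ) (CT : S → ℝ) (p : ℕ → S → A → S → ℝ)
    (V : ℕ → S → ℝ) : ℕ → S → ℝ :=
  fun t s =>
    if t < T then
      Finset.univ.sup' Finset.univ_nonempty
        (fun a => C t s a + ∑ s' : S, p t s a s' * V (t + 1) s')
    else CT s


/-- The bounding sequence `B^0 = V + c·e`, `B^{k+1} = (B^k + H B^k) / 2`.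
With `c = Vmax` this is the upper bounding sequence `U^k` started at `V* + Vmax·e`,
and with `c = -Vmax` it is the lower bounding sequence `L^k`. -/
noncomputable def boundSeq {S A : Type} [Fintype S] [Fintype A] [Nonempty A]
    (T : ℕ) (C : ℕ → S → A → ℝ) (CT : S → ℝ) (p : ℕ → S → A → S → ℝ)
    (V : ℕ → S → ℝ) (c : ℝ) : ℕ → ℕ → S → ℝ
  | 0 => fun t s => V t s + c
  | (k + 1) => fun t s =>
      (boundSeq T C CT p V c k t s + bellman T C CT p (boundSeq T C CT p V c k) t s) / 2

noncomputable def betaB (k m : ℕ) : ℝ :=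
  (∑ j ∈ Finset.range (m + 1), (k.choose j : ℝ)) / 2 ^ k

lemma betaB_zero (m : ℕ) : betaB 0 m = 1 := by
  unfold betaB
  rw [Finset.sum_eq_single 0]
  · simp
  · intro b _ hb; simp [Nat.choose_eq_zero_of_lt (Nat.pos_of_ne_zero hb)]
  · simp

lemma betaB_nonneg (k m : ℕ) : 0 ≤ betaB k m := by
  unfold betaB
  positivity

lemma betaB_mono (k m : ℕ) : betaB k m ≤ betaB k (m + 1) := by
  unfold betaB
  have h : (∑ j ∈ Finset.range (m + 1), (k.choose j : ℝ))
      ≤ ∑ j ∈ Finset.range (m + 2), (k.choose j : ℝ) :=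
    Finset.sum_le_sum_of_subset_of_nonneg (Finset.range_subset_range.2 (by omega))
      (fun i _ _ => by positivity)
  gcongr

lemma betaB_succ_zero (k : ℕ) : betaB (k + 1) 0 = betaB k 0 / 2 := by
  unfold betaB
  simp [pow_succ]
  ring

lemma betaB_succ (k m : ℕ) :
    betaB (k + 1) (m + 1) = (betaB k (m + 1) + betaB k m) / 2 := by
  unfold betaB
  have h : ∑ j ∈ Finset.range (m+2), ((k+1).choose j : ℝ)
      = ∑ j ∈ Finset.range (m+2), (k.choose j : ℝ)
        + ∑ j ∈ Finset.range (m+1), (k.choose j : ℝ) := by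
    rw [Finset.sum_range_succ' (fun j => ((k+1).choose j : ℝ)) (m+1),
        Finset.sum_range_succ' (fun j => ((k).choose j : ℝ)) (m+1)]
    simp only [Nat.choose_succ_succ, Nat.cast_add, Nat.choose_zero_right, Nat.cast_one,
      Finset.sum_add_distrib]
    ring
  rw [h, pow_succ]
  ring

lemma betaB_tendsto (m : ℕ) :
    Filter.Tendsto (fun k => betaB k m) Filter.atTop (nhds 0) := by
  unfold betaB
  have : (0:ℝ) = ∑ j ∈ Finset.range (m+1), (0:ℝ) := by simp
  rw [this]
  rw [show (fun k => (∑ j ∈ Finset.range (m + 1), (k.choose j : ℝ)) / 2 ^ k)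
      = fun k => ∑ j ∈ Finset.range (m + 1), (k.choose j : ℝ) / 2 ^ k from
    funext fun k => Finset.sum_div ..]
  refine tendsto_finset_sum _ fun j _ => ?_
  refine squeeze_zero (fun k => by positivity) (fun k => ?_)
    (tendsto_pow_const_div_const_pow_of_one_lt j (by norm_num : (1:ℝ) < 2))
  gcongr
  exact_mod_cast Nat.choose_le_pow k j

section main
variable {S A : Type} [Fintype S] [Fintype A] [Nonempty A]
    (T : ℕ)
    (C : ℕ → S → A → ℝ) (CT : S → ℝ) (p : ℕ → S → A → S → ℝ)
    (hp1 : ∀ t, t < T → ∀ (s : S) (a : A), ∑ s' : S, p t s a s' = 1)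
    (Vstar : ℕ → S → ℝ)
    (hVT : ∀ s : S, Vstar T s = CT s)
    (hVt : ∀ t, t < T → ∀ s : S, Vstar t s =
      Finset.univ.sup' Finset.univ_nonempty
        (fun a => C t s a + ∑ s' : S, p t s a s' * Vstar (t + 1) s'))

include hp1 hVT hVt

lemma bellman_eq (W : ℕ → S → ℝ) (d : ℕ → ℝ)
    (hW : ∀ t ≤ T, ∀ s : S, W t s = Vstar t s + d t) :
    ∀ t ≤ T, ∀ s : S, bellman T C CT p W t s
      = Vstar t s + (if t < T then d (t + 1) else 0) := by
  intro t ht s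
  unfold bellman
  by_cases h : t < T
  · rw [if_pos h, if_pos h]
    have hsum : ∀ a : A, ∑ s' : S, p t s a s' * W (t + 1) s'
        = (∑ s' : S, p t s a s' * Vstar (t + 1) s') + d (t + 1) := by
      intro a
      have : ∀ s' : S, p t s a s' * W (t + 1) s'
          = p t s a s' * Vstar (t + 1) s' + p t s a s' * d (t + 1) := by
        intro s'
        rw [hW (t + 1) (by omega) s']
        ring
      rw [Finset.sum_congr rfl (fun s' _ => this s'), Finset.sum_add_distrib,
        ← Finset.sum_mul, hp1 t h s a, one_mul]
    have : (fun a : A => C t s a + ∑ s' : S, p t s a s' * W (t + 1) s')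
        = fun a : A => (C t s a + ∑ s' : S, p t s a s' * Vstar (t + 1) s') + d (t + 1) := by
      funext a
      rw [hsum a]
      ring
    rw [this, ← Finset.sup'_add, ← hVt t h s]
  · rw [if_neg h, if_neg h, add_zero]
    have : t = T := by omega
    rw [this, hVT s]

lemma boundSeq_eq (c : ℝ) :
    ∀ k : ℕ, ∀ t ≤ T, ∀ s : S,
      boundSeq T C CT p Vstar c k t s = Vstar t s + c * betaB k (T - t) := by
  intro k
  induction k with
  | zero => intro t ht s; rw [betaB_zero, mul_one]; rfl
  | succ k ih =>
    intro t ht s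
    have hbell := bellman_eq T C CT p hp1 Vstar hVT hVt
      (boundSeq T C CT p Vstar c k) (fun t => c * betaB k (T - t)) ih t ht s
    show (boundSeq T C CT p Vstar c k t s
        + bellman T C CT p (boundSeq T C CT p Vstar c k) t s) / 2 = _
    rw [ih t ht s, hbell]
    by_cases h : t < T
    · rw [if_pos h]
      have h1 : T - t = (T - (t + 1)) + 1 := by omega
      rw [h1, betaB_succ]
      ring
    · rw [if_neg h]
      have h1 : T - t = 0 := by omega
      rw [h1, betaB_succ_zero]
      ring

lemma bellman_boundSeq_eq (c : ℝ) (k : ℕ) :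
    ∀ t ≤ T, ∀ s : S,
      bellman T C CT p (boundSeq T C CT p Vstar c k) t s
        = Vstar t s + c * (if t < T then betaB k (T - (t + 1)) else 0) := by
  intro t ht s
  have := bellman_eq T C CT p hp1 Vstar hVT hVt
    (boundSeq T C CT p Vstar c k) (fun t => c * betaB k (T - t))
    (boundSeq_eq T C CT p hp1 Vstar hVT hVt c k) t ht s
  rw [this]
  by_cases h : t < T <;> simp [h]

end main

theorem boundSeq_sandwich_and_tendsto {S A : Type} [Fintype S] [Nonempty S]
    [Fintype A] [Nonempty A]
    (T : ℕ) (hT : 1 ≤ T)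
    (C : ℕ → S → A → ℝ) (CT : S → ℝ) (p : ℕ → S → A → S → ℝ)
    (hp0 : ∀ t, t < T → ∀ (s : S) (a : A) (s' : S), 0 ≤ p t s a s')
    (hp1 : ∀ t, t < T → ∀ (s : S) (a : A), ∑ s' : S, p t s a s' = 1)
    (Vstar : ℕ → S → ℝ)
    (hVT : ∀ s : S, Vstar T s = CT s)
    (hVt : ∀ t, t < T → ∀ s : S, Vstar t s =
      Finset.univ.sup' Finset.univ_nonempty
        (fun a => C t s a + ∑ s' : S, p t s a s' * Vstar (t + 1) s'))
    (Vmax : ℝ) (hVmax : 0 < Vmax) :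
    (∀ k : ℕ, ∀ t ≤ T, ∀ s : S,
      bellman T C CT p (boundSeq T C CT p Vstar Vmax k) t s ≤
          boundSeq T C CT p Vstar Vmax (k + 1) t s ∧
        boundSeq T C CT p Vstar Vmax (k + 1) t s ≤ boundSeq T C CT p Vstar Vmax k t s) ∧
    (∀ k : ℕ, ∀ t ≤ T, ∀ s : S,
      boundSeq T C CT p Vstar (-Vmax) (k + 1) t s ≤
          bellman T C CT p (boundSeq T C CT p Vstar (-Vmax) k) t s ∧
        boundSeq T C CT p Vstar (-Vmax) k t s ≤ boundSeq T C CT p Vstar (-Vmax) (k + 1) t s) ∧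
    (∀ t ≤ T, ∀ s : S,
      Filter.Tendsto (fun k => boundSeq T C CT p Vstar Vmax k t s) Filter.atTop
          (nhds (Vstar t s)) ∧
        Filter.Tendsto (fun k => boundSeq T C CT p Vstar (-Vmax) k t s) Filter.atTop
          (nhds (Vstar t s))) := by
  have hbeta : ∀ k : ℕ, ∀ t ≤ T,
      (if t < T then betaB k (T - (t + 1)) else 0) ≤ betaB k (T - t) := by
    intro k t ht
    by_cases h : t < T
    · rw [if_pos h]
      have h1 : T - t = (T - (t + 1)) + 1 := by omega
      rw [h1]
      exact betaB_mono k _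
    · rw [if_neg h]
      exact betaB_nonneg k _
  have hbs := boundSeq_eq T C CT p hp1 Vstar hVT hVt
  have hbb := bellman_boundSeq_eq T C CT p hp1 Vstar hVT hVt
  refine ⟨?_, ?_, ?_⟩
  · intro k t ht s
    have h1 := hbs Vmax k t ht s
    have h2 := hbb Vmax k t ht s
    have key : bellman T C CT p (boundSeq T C CT p Vstar Vmax k) t s
        ≤ boundSeq T C CT p Vstar Vmax k t s := by
      rw [h1, h2]
      have := hbeta k t ht
      nlinarith
    have hdef : boundSeq T C CT p Vstar Vmax (k + 1) t s
        = (boundSeq T C CT p Vstar Vmax k t s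
          + bellman T C CT p (boundSeq T C CT p Vstar Vmax k) t s) / 2 := rfl
    constructor <;> rw [hdef] <;> linarith
  · intro k t ht s
    have h1 := hbs (-Vmax) k t ht s
    have h2 := hbb (-Vmax) k t ht s
    have key : boundSeq T C CT p Vstar (-Vmax) k t s
        ≤ bellman T C CT p (boundSeq T C CT p Vstar (-Vmax) k) t s := by
      rw [h1, h2]
      have := hbeta k t ht
      nlinarith
    have hdef : boundSeq T C CT p Vstar (-Vmax) (k + 1) t s
        = (boundSeq T C CT p Vstar (-Vmax) k t s
          + bellman T C CT p (boundSeq T C CT p Vstar (-Vmax) k) t s) / 2 := rfl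
    constructor <;> rw [hdef] <;> linarith
  · intro t ht s
    constructor
    · have h1 : (fun k => boundSeq T C CT p Vstar Vmax k t s)
          = fun k => Vstar t s + Vmax * betaB k (T - t) :=
        funext fun k => hbs Vmax k t ht s
      rw [h1]
      have := ((betaB_tendsto (T - t)).const_mul Vmax).const_add (Vstar t s)
      simpa using this
    · have h1 : (fun k => boundSeq T C CT p Vstar (-Vmax) k t s)
          = fun k => Vstar t s + (-Vmax) * betaB k (T - t) :=
        funext fun k => hbs (-Vmax) k t ht s
      rw [h1]
      have := ((betaB_tendsto (T - t)).const_mul (-Vmax)).const_add (Vstar t s)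
      simpa using this
end

section
/- Suppose S carries a partial order ⪯ such that: (i) the terminal contribution C_T is monotone over S, and (ii) for every t < T and every value-function vector V such that V_{t+1} is monotone over S, the function (HV)_t is monotone over S. Fix Vmax > 0 and define U^0 = V* + Vmax·e, L^0 = V* − Vmax·e, U^{k+1} = (U^k + H U^k)/2 and L^{k+1} = (L^k + H L^k)/2. Then for every k ≥ 0, every t ∈ {0,…,T}, and every pair of states s ⪯ s': U^k_t(s) ≤ U^k_t(s') and L^k_t(s) ≤ L^k_t(s'). -/
lemma boundSeq_mono_aux {S A : Type} [Fintype S] [PartialOrder S]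
    [Fintype A] [Nonempty A]
    (T : ℕ)
    (C : ℕ → S → A → ℝ) (CT : S → ℝ) (p : ℕ → S → A → S → ℝ)
    (hCT : Monotone CT)
    (hH : ∀ t, t < T → ∀ V : ℕ → S → ℝ, Monotone (V (t + 1)) →
      Monotone (fun s => bellman T C CT p V t s))
    (V : ℕ → S → ℝ) (hV : ∀ t, t ≤ T → Monotone (V t)) (c : ℝ) :
    ∀ k, ∀ t, t ≤ T → Monotone (boundSeq T C CT p V c k t) := by
  intro k
  induction k with
  | zero =>
    intro t ht s s' hss
    simpa [boundSeq] using hV t ht hss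
  | succ k ih =>
    intro t ht s s' hss
    have hB := ih t ht hss
    have hHB : bellman T C CT p (boundSeq T C CT p V c k) t s ≤
        bellman T C CT p (boundSeq T C CT p V c k) t s' := by
      rcases lt_or_eq_of_le ht with h | h
      · exact hH t h _ (ih (t + 1) h) hss
      · subst h
        simpa [bellman] using hCT hss
    simp only [boundSeq]
    linarith

theorem boundSeq_monotone {S A : Type} [Fintype S] [Nonempty S] [PartialOrder S]
    [Fintype A] [Nonempty A]
    (T : ℕ) (hT : 1 ≤ T)
    (C : ℕ → S → A → ℝ) (CT : S → ℝ) (p : ℕ → S → A → S → ℝ)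
    (hp0 : ∀ t, t < T → ∀ (s : S) (a : A) (s' : S), 0 ≤ p t s a s')
    (hp1 : ∀ t, t < T → ∀ (s : S) (a : A), ∑ s' : S, p t s a s' = 1)
    (hCT : Monotone CT)
    (hH : ∀ t, t < T → ∀ V : ℕ → S → ℝ, Monotone (V (t + 1)) →
      Monotone (fun s => bellman T C CT p V t s))
    (Vstar : ℕ → S → ℝ)
    (hVT : ∀ s : S, Vstar T s = CT s)
    (hVt : ∀ t, t < T → ∀ s : S, Vstar t s =
      Finset.univ.sup' Finset.univ_nonempty
        (fun a => C t s a + ∑ s' : S, p t s a s' * Vstar (t + 1) s'))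
    (Vmax : ℝ) (hVmax : 0 < Vmax) :
    ∀ k : ℕ, ∀ t ≤ T, ∀ s s' : S, s ≤ s' →
      boundSeq T C CT p Vstar Vmax k t s ≤ boundSeq T C CT p Vstar Vmax k t s' ∧
        boundSeq T C CT p Vstar (-Vmax) k t s ≤ boundSeq T C CT p Vstar (-Vmax) k t s' := by
  have hbell : ∀ t, t < T → ∀ s : S, bellman T C CT p Vstar t s = Vstar t s := by
    intro t h s
    simp [bellman, h, hVt t h s]
  have key : ∀ j, j ≤ T → Monotone (Vstar (T - j)) := by
    intro j
    induction j with
    | zero =>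
      intro _ s s' hss
      simpa [hVT] using hCT hss
    | succ j ih =>
      intro hj
      have hlt : T - (j + 1) < T := by omega
      have h1 : T - (j + 1) + 1 = T - j := by omega
      have hm : Monotone (Vstar (T - (j + 1) + 1)) := by
        rw [h1]; exact ih (by omega)
      have := hH (T - (j + 1)) hlt Vstar hm
      intro s s' hss
      rw [← hbell _ hlt s, ← hbell _ hlt s']
      exact this hss
  have hV : ∀ t, t ≤ T → Monotone (Vstar t) := by
    intro t ht
    have : t = T - (T - t) := by omega
    rw [this]
    exact key (T - t) (by omega)
  intro k t ht s s' hss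
  exact ⟨boundSeq_mono_aux T C CT p hCT hH Vstar hV Vmax k t ht hss,
    boundSeq_mono_aux T C CT p hCT hH Vstar hV (-Vmax) k t ht hss⟩
end

section
/- Let V : S → ℝ be monotone, s^r ∈ S, z^r ∈ ℝ, and set V' = Π_M(s^r, z^r, V). Suppose s ∈ S satisfies s ≠ s^r and V(s) < V'(s) (the value at s was increased by the projection). Then there exists a lower immediate neighbor s' ∈ S_L(s) with V'(s') = V'(s). -/
open scoped Classical

/-- The set of lower immediate neighbors of `s`: states strictly below `s` with no other
state strictly in between. -/
def lowerNbrs {S : Type} [PartialOrder S] (s : S) : Set S :=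
  {s' | s' ≤ s ∧ s' ≠ s ∧ ¬∃ s'' : S, s'' ≠ s ∧ s'' ≠ s' ∧ s' ≤ s'' ∧ s'' ≤ s}

theorem exists_lowerNbr_eq_of_increased {S : Type} [Fintype S] [PartialOrder S]
    (V : S → ℝ) (hV : Monotone V) (sr : S) (zr : ℝ) (s : S) (hs : s ≠ sr)
    (hinc : V s < projMono sr zr V s) :
    ∃ s' ∈ lowerNbrs s, projMono sr zr V s' = projMono sr zr V s := by
  unfold projMono at hinc
  rw [if_neg hs] at hinc
  by_cases hle : sr ≤ s
  · rw [if_pos hle] at hinc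
    have hzr : V s < zr := by
      rcases lt_max_iff.mp hinc with h | h
      · exact h
      · exact absurd h (lt_irrefl _)
    have hVs : projMono sr zr V s = zr := by
      simp [projMono, if_neg hs, if_pos hle, max_eq_left hzr.le]
    set T : Finset S := Finset.univ.filter (fun t => sr ≤ t ∧ t ≤ s ∧ t ≠ s) with hT
    have hTne : T.Nonempty := ⟨sr, by simp [hT, hle, Ne.symm hs]⟩
    obtain ⟨s', hs'T, hmax⟩ := T.exists_maximal hTne
    simp only [hT, Finset.mem_filter, Finset.mem_univ, true_and] at hs'T
    obtain ⟨hsr_le, hs'_le, hs'_ne⟩ := hs'T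
    refine ⟨s', ⟨hs'_le, hs'_ne, ?_⟩, ?_⟩
    · rintro ⟨s'', h1, h2, h3, h4⟩
      have : s'' ∈ T := by
        simp [hT, le_trans hsr_le h3, h4, h1]
      exact h2 (le_antisymm (hmax this h3) h3)
    · rw [hVs]
      by_cases h : s' = sr
      · simp [projMono, h]
      · have hVs' : V s' ≤ zr := le_of_lt (lt_of_le_of_lt (hV hs'_le) hzr)
        simp [projMono, if_neg h, if_pos hsr_le, max_eq_left hVs']
  · rw [if_neg hle] at hinc
    by_cases h2 : s ≤ sr
    · rw [if_pos h2] at hinc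
      exact absurd hinc (not_lt.mpr (min_le_right _ _))
    · rw [if_neg h2] at hinc
      exact absurd hinc (lt_irrefl _)
end

section
/- Let (Ω, ℱ, P) be a probability space with a filtration (ℱ^n)_{n≥0}. Let (α^n)_{n≥0} be random variables with α^n ∈ [0,1], each α^n measurable with respect to ℱ^n, satisfying ∑_{n=0}^∞ α^n = ∞ almost surely and ∑_{n=0}^∞ (α^n)² < ∞ almost surely. Let (w^{n+1})_{n≥0} be random variables such that each w^{n+1} is ℱ^{n+1}-measurable, |w^{n+1}| ≤ K almost surely for a constant K > 0, and E[w^{n+1} | ℱ^n] = 0 almost surely. Define the positive incurred noise sequence by W^0 = 0 and W^{n+1} = max(0, (1 − α^n) W^n + α^n w^{n+1}). Then W^n → 0 almost surely as n → ∞. -/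
open MeasureTheory Filter Finset Topology ENNReal NNReal

lemma pin_prod_tendsto (a : ℕ → ℝ) (h01 : ∀ n, a n ∈ Set.Icc (0:ℝ) 1)
    (hdiv : Tendsto (fun N => ∑ n ∈ Finset.range N, a n) atTop atTop) (m : ℕ) :
    Tendsto (fun n => ∏ i ∈ Finset.Ico m n, (1 - a i)) atTop (𝓝 0) := by
  have hsum : Tendsto (fun n => ∑ i ∈ Finset.Ico m n, a i) atTop atTop := by
    apply Tendsto.congr' _ (hdiv.atTop_add (tendsto_const_nhds (x := -(∑ i ∈ Finset.range m, a i))))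
    filter_upwards [eventually_ge_atTop m] with n hn
    rw [Finset.sum_Ico_eq_sub _ hn]; ring
  have hexp : Tendsto (fun n => Real.exp (-(∑ i ∈ Finset.Ico m n, a i))) atTop (𝓝 0) :=
    Real.tendsto_exp_atBot.comp (tendsto_neg_atTop_atBot.comp hsum)
  refine squeeze_zero (fun n => Finset.prod_nonneg fun i _ => by linarith [(h01 i).2]) (fun n => ?_) hexp
  calc ∏ i ∈ Finset.Ico m n, (1 - a i) ≤ ∏ i ∈ Finset.Ico m n, Real.exp (-(a i)) := by
        refine Finset.prod_le_prod (fun i _ => by linarith [(h01 i).2]) (fun i _ => ?_)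
        have := Real.add_one_le_exp (-(a i)); linarith
    _ = Real.exp (-(∑ i ∈ Finset.Ico m n, a i)) := by
        rw [← Real.exp_sum, Finset.sum_neg_distrib]

lemma pin_tendsto_zero_of_bound (a : ℕ → ℝ) (h01 : ∀ n, a n ∈ Set.Icc (0:ℝ) 1)
    (hprod : ∀ m, Tendsto (fun n => ∏ i ∈ Finset.Ico m n, (1 - a i)) atTop (𝓝 0))
    (y : ℕ → ℝ) (hy0 : ∀ n, 0 ≤ y n)
    (hkey : ∀ ε > (0:ℝ), ∃ m C, ∀ n, m ≤ n →
      y n ≤ (∏ i ∈ Finset.Ico m n, (1 - a i)) * C + ε) :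
    Tendsto y atTop (𝓝 0) := by
  rw [Metric.tendsto_atTop]
  intro ε hε
  obtain ⟨m, C, hmC⟩ := hkey (ε/2) (by linarith)
  have h0 : Tendsto (fun n => (∏ i ∈ Finset.Ico m n, (1 - a i)) * C) atTop (𝓝 0) := by
    simpa using (hprod m).mul_const C
  rw [Metric.tendsto_atTop] at h0
  obtain ⟨N, hN⟩ := h0 (ε/2) (by linarith)
  refine ⟨max m N, fun n hn => ?_⟩
  have h1 := hmC n (le_trans (le_max_left _ _) hn)
  have h2 := hN n (le_trans (le_max_right _ _) hn)
  rw [Real.dist_eq, sub_zero] at h2 ⊢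
  rw [abs_of_nonneg (hy0 n)]
  have := le_abs_self ((∏ i ∈ Finset.Ico m n, (1 - a i)) * C)
  linarith

lemma pin_rec_tendsto (a : ℕ → ℝ) (h01 : ∀ n, a n ∈ Set.Icc (0:ℝ) 1)
    (hprod : ∀ m, Tendsto (fun n => ∏ i ∈ Finset.Ico m n, (1 - a i)) atTop (𝓝 0))
    (u y : ℕ → ℝ) (hy0 : ∀ n, 0 ≤ y n) (hu : Tendsto u atTop (𝓝 0))
    (hrec : ∀ n, y (n+1) ≤ (1 - a n) * y n + a n * |u n|) :
    Tendsto y atTop (𝓝 0) := by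
  refine pin_tendsto_zero_of_bound a h01 hprod y hy0 (fun ε hε => ?_)
  obtain ⟨m, hm⟩ := (Metric.tendsto_atTop.1 hu) ε hε
  refine ⟨m, y m, fun n hn => ?_⟩
  induction n, hn using Nat.le_induction with
  | base => simp; linarith
  | succ n hn ih =>
    have hP : ∏ i ∈ Finset.Ico m (n+1), (1 - a i)
        = (∏ i ∈ Finset.Ico m n, (1 - a i)) * (1 - a n) := Finset.prod_Ico_succ_top hn _
    have hun : |u n| ≤ ε := by
      have := hm n hn; rw [Real.dist_eq, sub_zero] at this; linarith
    have h1 : 0 ≤ 1 - a n := by linarith [(h01 n).2]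
    have h2 := (h01 n).1
    calc y (n+1) ≤ (1 - a n) * y n + a n * |u n| := hrec n
      _ ≤ (1 - a n) * ((∏ i ∈ Finset.Ico m n, (1 - a i)) * y m + ε) + a n * ε := by
          have := mul_le_mul_of_nonneg_left ih h1
          nlinarith
      _ = (∏ i ∈ Finset.Ico m (n+1), (1 - a i)) * y m + ε := by rw [hP]; ring

lemma pin_W_tendsto (a : ℕ → ℝ) (h01 : ∀ n, a n ∈ Set.Icc (0:ℝ) 1)
    (hprod : ∀ m, Tendsto (fun n => ∏ i ∈ Finset.Ico m n, (1 - a i)) atTop (𝓝 0))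
    (v S Wd : ℕ → ℝ)
    (hSrec : ∀ n, S (n+1) = (1 - a n) * S n + a n * v n)
    (hS : Tendsto S atTop (𝓝 0))
    (hW0 : Wd 0 = 0)
    (hWrec : ∀ n, Wd (n+1) = max 0 ((1 - a n) * Wd n + a n * v n)) :
    Tendsto Wd atTop (𝓝 0) := by
  have hWnn : ∀ n, 0 ≤ Wd n := by
    intro n; cases n with
    | zero => rw [hW0]
    | succ k => rw [hWrec]; exact le_max_left _ _
  refine pin_tendsto_zero_of_bound a h01 hprod Wd hWnn (fun ε hε => ?_)
  obtain ⟨m, hm⟩ := (Metric.tendsto_atTop.1 hS) (ε/4) (by linarith)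
  have hSsm : ∀ j, m ≤ j → |S j| ≤ ε/4 := fun j hj => by
    have := hm j hj; rw [Real.dist_eq, sub_zero] at this; linarith
  set P : ℕ → ℝ := fun n => ∏ i ∈ Finset.Ico m n, (1 - a i) with hPdef
  have hPnn : ∀ n, 0 ≤ P n := fun n =>
    Finset.prod_nonneg fun i _ => by linarith [(h01 i).2]
  have hPle1 : ∀ n, P n ≤ 1 := fun n =>
    Finset.prod_le_one (fun i _ => by linarith [(h01 i).2]) (fun i _ => by linarith [(h01 i).1])
  have hPsucc : ∀ n, m ≤ n → P (n+1) = P n * (1 - a n) := fun n hn =>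
    Finset.prod_Ico_succ_top hn _
  set D : ℕ → ℝ := fun n => S n - P n * S m with hDdef
  have hDrec : ∀ n, m ≤ n → D (n+1) = (1 - a n) * D n + a n * v n := by
    intro n hn
    simp only [hDdef, hSrec n, hPsucc n hn]; ring
  have hDbd : ∀ j, m ≤ j → -D j ≤ ε/2 := by
    intro j hj
    have h1 := hSsm j hj
    have h2 := hSsm m le_rfl
    have h3 : |P j * S m| ≤ |S m| := by
      rw [abs_mul, abs_of_nonneg (hPnn j)]
      calc P j * |S m| ≤ 1 * |S m| := by
            exact mul_le_mul_of_nonneg_right (hPle1 j) (abs_nonneg _)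
        _ = |S m| := one_mul _
    have h4 := abs_le.1 h1
    have h5 := abs_le.1 h3
    simp only [hDdef]; linarith
  refine ⟨m, Wd m + |S m|, fun n hn => ?_⟩
  have key : ∀ n, m ≤ n → Wd n ≤ P n * Wd m + D n + ε/2 := by
    intro n hn
    induction n, hn using Nat.le_induction with
    | base =>
      have : P m = 1 := by simp [hPdef]
      have hDm : D m = 0 := by simp only [hDdef, this]; ring
      rw [this, hDm]; linarith [hWnn m]
    | succ n hn ih =>
      have h1 : 0 ≤ 1 - a n := by linarith [(h01 n).2]
      have h2 := (h01 n).1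
      have hT0 : 0 ≤ P (n+1) * Wd m + D (n+1) + ε/2 := by
        have := hDbd (n+1) (by omega)
        have := mul_nonneg (hPnn (n+1)) (hWnn m)
        linarith
      rw [hWrec n]
      refine max_le hT0 ?_
      have hin : (1 - a n) * Wd n + a n * v n
          ≤ (1 - a n) * (P n * Wd m + D n + ε/2) + a n * v n := by
        nlinarith [mul_le_mul_of_nonneg_left ih h1]
      calc (1 - a n) * Wd n + a n * v n
          ≤ (1 - a n) * (P n * Wd m + D n + ε/2) + a n * v n := hin
        _ = P (n+1) * Wd m + D (n+1) + (1 - a n) * (ε/2) := by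
            rw [hPsucc n hn, hDrec n hn]; ring
        _ ≤ P (n+1) * Wd m + D (n+1) + ε/2 := by nlinarith
  have h1 := key n hn
  have h2 := hSsm n hn
  have h4 := abs_le.1 h2
  have h5 : |P n * S m| ≤ P n * |S m| := by
    rw [abs_mul, abs_of_nonneg (hPnn n)]
  have h5' := abs_le.1 h5
  have h7 := le_abs_self (S n)
  have : D n ≤ |S n| + P n * |S m| := by simp only [hDdef]; linarith
  have h6 := abs_le.1 h2
  calc Wd n ≤ P n * Wd m + D n + ε/2 := h1
    _ ≤ P n * Wd m + (|S n| + P n * |S m|) + ε/2 := by linarith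
    _ ≤ P n * (Wd m + |S m|) + ε := by nlinarith


lemma pin_M_conv {Ω : Type} {m0 : MeasurableSpace Ω} (μ : Measure Ω) [IsProbabilityMeasure μ]
    (ℱ : Filtration ℕ m0)
    (α : ℕ → Ω → ℝ)
    (hα01 : ∀ n ω, α n ω ∈ Set.Icc (0 : ℝ) 1)
    (hαmeas : ∀ n, Measurable[ℱ n] (α n))
    (w : ℕ → Ω → ℝ) (K : ℝ) (hK : 0 < K)
    (hwmeas : ∀ n, Measurable[ℱ (n + 1)] (w (n + 1)))
    (hwbd : ∀ n, ∀ᵐ ω ∂μ, |w (n + 1) ω| ≤ K)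
    (hwzero : ∀ n, μ[w (n + 1) | ℱ n] =ᵐ[μ] 0) :
    ∀ᵐ ω ∂μ, (Summable fun n => (α n ω) ^ 2) →
      ∃ L, Tendsto (fun n => ∑ k ∈ Finset.range n, α k ω * w (k+1) ω) atTop (𝓝 L) := by
  have hwm0 : ∀ n, Measurable (w (n+1)) := fun n => (hwmeas n).mono (ℱ.le (n+1)) le_rfl
  have hwbd' : ∀ᵐ ω ∂μ, ∀ n, |w (n+1) ω| ≤ K := ae_all_iff.2 hwbd
  have hwint : ∀ n, Integrable (w (n+1)) μ := fun n => by
    refine (integrable_const K).mono' (hwm0 n).aestronglyMeasurable ?_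
    filter_upwards [hwbd n] with ω hω using by simpa using hω
  have key : ∀ C : ℕ, ∀ᵐ ω ∂μ, ∃ L, Tendsto (fun n => ∑ k ∈ Finset.range n,
      (if (∑ j ∈ Finset.range k, (α j ω)^2) ≤ (C:ℝ) then α k ω else 0) * w (k+1) ω)
      atTop (𝓝 L) := by
    intro C
    set β : ℕ → Ω → ℝ := fun k ω =>
      if (∑ j ∈ Finset.range k, (α j ω)^2) ≤ (C:ℝ) then α k ω else 0 with hβdef
    have hβmeasF : ∀ k, Measurable[ℱ k] (β k) := by
      intro k
      refine Measurable.ite ?_ (hαmeas k) measurable_const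
      refine measurableSet_le (Finset.measurable_sum _ fun j hj => ?_) measurable_const
      exact ((hαmeas j).mono (ℱ.mono (Finset.mem_range.1 hj).le) le_rfl).pow_const 2
    have hβm0 : ∀ k, Measurable (β k) := fun k => (hβmeasF k).mono (ℱ.le k) le_rfl
    have hβ01 : ∀ k ω, β k ω ∈ Set.Icc (0:ℝ) 1 := by
      intro k ω
      simp only [hβdef]
      split_ifs
      · exact hα01 k ω
      · exact ⟨le_refl 0, zero_le_one⟩
    have hβsq : ∀ n ω, ∑ k ∈ Finset.range n, (β k ω)^2 ≤ (C:ℝ) + 1 := by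
      intro n ω
      have main : ∀ n, ∑ k ∈ Finset.range n, (β k ω)^2 ≤
          if (∑ j ∈ Finset.range n, (α j ω)^2) ≤ (C:ℝ)
          then (∑ j ∈ Finset.range n, (α j ω)^2) else (C:ℝ) + 1 := by
        intro n
        induction n with
        | zero => simp
        | succ n ih =>
          have hα2 : (α n ω)^2 ≤ 1 := by
            have h := hα01 n ω; nlinarith [h.1, h.2]
          have hβ2 : (β n ω)^2 ≤ (α n ω)^2 := by
            simp only [hβdef]; split_ifs
            · exact le_refl _
            · simpa using sq_nonneg (α n ω)
          rw [Finset.sum_range_succ, Finset.sum_range_succ (fun j => (α j ω)^2)]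
          by_cases h1 : (∑ j ∈ Finset.range n, (α j ω)^2) ≤ (C:ℝ)
          · have hβn : β n ω = α n ω := if_pos h1
            rw [if_pos h1] at ih
            by_cases h2 : (∑ j ∈ Finset.range n, (α j ω)^2) + (α n ω)^2 ≤ (C:ℝ)
            · rw [if_pos h2, hβn]; linarith
            · rw [if_neg h2, hβn]; linarith
          · have hβn : β n ω = 0 := if_neg h1
            rw [if_neg h1] at ih
            have h2 : ¬ ((∑ j ∈ Finset.range n, (α j ω)^2) + (α n ω)^2 ≤ (C:ℝ)) := by
              nlinarith [sq_nonneg (α n ω)]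
            rw [if_neg h2, hβn]; linarith
      refine le_trans (main n) ?_
      split_ifs with h
      · exact le_trans h (by linarith)
      · exact le_refl _
    set g : ℕ → Ω → ℝ := fun k ω => β k ω * w (k+1) ω with hgdef
    set f : ℕ → Ω → ℝ := fun n ω => ∑ k ∈ Finset.range n, g k ω with hfdef
    have hgm0 : ∀ k, Measurable (g k) := fun k => (hβm0 k).mul (hwm0 k)
    have hgbd : ∀ k, ∀ᵐ ω ∂μ, |g k ω| ≤ K := by
      intro k
      filter_upwards [hwbd k] with ω hω
      simp only [hgdef, abs_mul]
      calc |β k ω| * |w (k+1) ω| ≤ 1 * K := by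
            refine mul_le_mul ?_ hω (abs_nonneg _) zero_le_one
            rw [abs_le]; exact ⟨by linarith [(hβ01 k ω).1], (hβ01 k ω).2⟩
        _ = K := one_mul K
    have hgint : ∀ k, Integrable (g k) μ := fun k => by
      refine (integrable_const K).mono' (hgm0 k).aestronglyMeasurable ?_
      filter_upwards [hgbd k] with ω hω using by simpa using hω
    have hfint : ∀ n, Integrable (f n) μ := fun n => integrable_finset_sum _ fun k _ => hgint k
    have hfadp : StronglyAdapted ℱ f := by
      intro n
      refine Measurable.stronglyMeasurable ?_
      refine Finset.measurable_sum _ fun k hk => ?_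
      have hk' := Finset.mem_range.1 hk
      exact ((hβmeasF k).mono (ℱ.mono hk'.le) le_rfl).mul
        ((hwmeas k).mono (ℱ.mono hk') le_rfl)
    have hfsucc : ∀ n, f (n+1) = f n + g n := fun n =>
      funext fun ω => Finset.sum_range_succ _ n
    have hmart : Martingale f ℱ μ := by
      refine martingale_nat hfadp hfint fun n => ?_
      rw [hfsucc n]
      refine EventuallyEq.symm ?_
      calc μ[f n + g n | ℱ n] =ᵐ[μ] μ[f n | ℱ n] + μ[g n | ℱ n] :=
            condExp_add (hfint n) (hgint n) _
        _ =ᵐ[μ] f n + 0 := by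
            refine EventuallyEq.add ?_ ?_
            · exact Filter.EventuallyEq.of_eq
                (condExp_of_stronglyMeasurable (ℱ.le n) (hfadp n) (hfint n))
            · calc μ[g n | ℱ n] =ᵐ[μ] β n * μ[w (n+1) | ℱ n] :=
                    condExp_mul_of_stronglyMeasurable_left (hβmeasF n).stronglyMeasurable
                      (hgint n) (hwint n)
                _ =ᵐ[μ] 0 := by
                    filter_upwards [hwzero n] with ω hω
                    simp only [Pi.mul_apply, Pi.zero_apply] at hω ⊢
                    rw [hω, mul_zero]
        _ =ᵐ[μ] f n := by rw [add_zero]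
    -- integrability of squares and products
    have hfbd : ∀ n, ∀ᵐ ω ∂μ, |f n ω| ≤ n * K := by
      intro n
      filter_upwards [hwbd'] with ω hω
      calc |f n ω| ≤ ∑ k ∈ Finset.range n, |g k ω| := Finset.abs_sum_le_sum_abs _ _
        _ ≤ ∑ k ∈ Finset.range n, K := by
            refine Finset.sum_le_sum fun k _ => ?_
            simp only [hgdef, abs_mul]
            calc |β k ω| * |w (k+1) ω| ≤ 1 * K := by
                  refine mul_le_mul ?_ (hω k) (abs_nonneg _) zero_le_one
                  rw [abs_le]; exact ⟨by linarith [(hβ01 k ω).1], (hβ01 k ω).2⟩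
              _ = K := one_mul K
        _ = n * K := by simp [mul_comm]
    have hf2int : ∀ n, Integrable (fun ω => (f n ω)^2) μ := by
      intro n
      refine (integrable_const ((n*K)^2)).mono'
        (((hfadp n).measurable.mono (ℱ.le n) le_rfl).pow_const 2).aestronglyMeasurable ?_
      filter_upwards [hfbd n] with ω hω
      rw [Real.norm_eq_abs, abs_of_nonneg (sq_nonneg _)]
      have h0 : (0:ℝ) ≤ n * K := by positivity
      nlinarith [abs_nonneg (f n ω), sq_abs (f n ω)]
    have hfm0 : ∀ n, Measurable (f n) := fun n => (hfadp n).measurable.mono (ℱ.le n) le_rfl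
    have hβ2int : ∀ k, Integrable (fun ω => (β k ω)^2) μ := by
      intro k
      refine (integrable_const 1).mono' (((hβm0 k).pow_const 2).aestronglyMeasurable) ?_
      refine Eventually.of_forall fun ω => ?_
      rw [Real.norm_eq_abs, abs_of_nonneg (sq_nonneg _)]
      nlinarith [(hβ01 k ω).1, (hβ01 k ω).2]
    have hg2int : ∀ k, Integrable (fun ω => (g k ω)^2) μ := by
      intro k
      refine (integrable_const (K^2)).mono' (((hgm0 k).pow_const 2).aestronglyMeasurable) ?_
      filter_upwards [hgbd k] with ω hω
      rw [Real.norm_eq_abs, abs_of_nonneg (sq_nonneg _)]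
      nlinarith [abs_nonneg (g k ω), sq_abs (g k ω)]
    have hfβwint : ∀ n, Integrable (fun ω => (f n ω * β n ω) * w (n+1) ω) μ := by
      intro n
      refine (integrable_const ((n*K) * K)).mono'
        (((hfm0 n).mul (hβm0 n)).mul (hwm0 n)).aestronglyMeasurable ?_
      filter_upwards [hfbd n, hwbd n] with ω h1 h2
      rw [Real.norm_eq_abs, abs_mul, abs_mul]
      have hβ : |β n ω| ≤ 1 := by
        rw [abs_le]; exact ⟨by linarith [(hβ01 n ω).1], (hβ01 n ω).2⟩
      have h3 : |f n ω| * |β n ω| ≤ (n*K) * 1 := by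
        refine mul_le_mul h1 hβ (abs_nonneg _) ?_
        positivity
      calc |f n ω| * |β n ω| * |w (n+1) ω| ≤ ((n*K) * 1) * K := by
            refine mul_le_mul h3 h2 (abs_nonneg _) ?_
            positivity
        _ = (n*K) * K := by ring
    have hfgint : ∀ n, Integrable (fun ω => f n ω * g n ω) μ := by
      intro n
      have : (fun ω => f n ω * g n ω) = fun ω => (f n ω * β n ω) * w (n+1) ω := by
        funext ω; simp only [hgdef]; ring
      rw [this]; exact hfβwint n
    -- orthogonality of increments
    have horth : ∀ n, ∫ ω, f n ω * g n ω ∂μ = 0 := by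
      intro n
      have heq : ∫ ω, f n ω * g n ω ∂μ = ∫ ω, (fun ω => f n ω * β n ω) ω * w (n+1) ω ∂μ := by
        refine integral_congr_ae (Eventually.of_forall fun ω => ?_)
        simp only [hgdef]; ring
      rw [heq]
      have hsm : StronglyMeasurable[ℱ n] (fun ω => f n ω * β n ω) :=
        (hfadp n).mul (hβmeasF n).stronglyMeasurable
      have hint : Integrable (fun ω => (fun ω => f n ω * β n ω) ω * w (n+1) ω) μ := hfβwint n
      have hce : μ[(fun ω => (fun ω => f n ω * β n ω) ω * w (n+1) ω) | ℱ n]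
          =ᵐ[μ] (fun ω => f n ω * β n ω) * μ[w (n+1) | ℱ n] :=
        condExp_mul_of_stronglyMeasurable_left hsm hint (hwint n)
      have hzero : μ[(fun ω => (fun ω => f n ω * β n ω) ω * w (n+1) ω) | ℱ n] =ᵐ[μ] 0 := by
        refine hce.trans ?_
        filter_upwards [hwzero n] with ω hω
        simp only [Pi.mul_apply, Pi.zero_apply] at hω ⊢
        rw [hω, mul_zero]
      calc ∫ ω, (fun ω => f n ω * β n ω) ω * w (n+1) ω ∂μ
          = ∫ ω, (μ[(fun ω => (fun ω => f n ω * β n ω) ω * w (n+1) ω) | ℱ n]) ω ∂μ :=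
            (integral_condExp (ℱ.le n)).symm
        _ = ∫ ω, (0:Ω → ℝ) ω ∂μ := integral_congr_ae hzero
        _ = 0 := by simp
    -- L² bound
    have hL2 : ∀ n, ∫ ω, (f n ω)^2 ∂μ ≤ K^2 * ((C:ℝ) + 1) := by
      have main : ∀ n, ∫ ω, (f n ω)^2 ∂μ
          ≤ K^2 * ∑ k ∈ Finset.range n, ∫ ω, (β k ω)^2 ∂μ := by
        intro n
        induction n with
        | zero => simp [hfdef]
        | succ n ih =>
          have hexp : (fun ω => (f (n+1) ω)^2)
              = fun ω => (f n ω)^2 + (2 * (f n ω * g n ω) + (g n ω)^2) := by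
            funext ω
            rw [hfsucc n]
            simp only [Pi.add_apply]; ring
          have hstep : ∫ ω, (f (n+1) ω)^2 ∂μ
              = ∫ ω, (f n ω)^2 ∂μ + (2 * ∫ ω, f n ω * g n ω ∂μ + ∫ ω, (g n ω)^2 ∂μ) := by
            have hi2a : Integrable (fun ω => 2 * (f n ω * g n ω)) μ := (hfgint n).const_mul 2
            have hi2 : Integrable (fun ω => 2 * (f n ω * g n ω) + (g n ω)^2) μ :=
              hi2a.add (hg2int n)
            rw [hexp, integral_add (hf2int n) hi2, integral_add hi2a (hg2int n),
              integral_const_mul]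
          have hgsq : ∫ ω, (g n ω)^2 ∂μ ≤ K^2 * ∫ ω, (β n ω)^2 ∂μ := by
            rw [← integral_const_mul]
            refine integral_mono_ae (hg2int n) ((hβ2int n).const_mul _) ?_
            filter_upwards [hwbd n] with ω hω
            simp only [hgdef]
            have : (w (n+1) ω)^2 ≤ K^2 := by nlinarith [abs_nonneg (w (n+1) ω), sq_abs (w (n+1) ω)]
            nlinarith [sq_nonneg (β n ω)]
          rw [hstep, horth n, Finset.sum_range_succ, mul_add]
          linarith
      intro n
      refine le_trans (main n) ?_
      have hsum : ∑ k ∈ Finset.range n, ∫ ω, (β k ω)^2 ∂μ ≤ (C:ℝ) + 1 := by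
        rw [← integral_finset_sum _ fun k _ => hβ2int k]
        calc ∫ ω, ∑ k ∈ Finset.range n, (β k ω)^2 ∂μ ≤ ∫ _ω, ((C:ℝ) + 1) ∂μ := by
              refine integral_mono (integrable_finset_sum _ fun k _ => hβ2int k)
                (integrable_const _) fun ω => hβsq n ω
          _ = (C:ℝ) + 1 := by simp
      nlinarith [sq_nonneg K]
    -- L¹ bound
    have hL1 : ∀ n, eLpNorm (f n) 1 μ ≤ ((1 + K^2 * ((C:ℝ)+1)).toNNReal : ℝ≥0∞) := by
      intro n
      have habs : ∫ ω, ‖f n ω‖ ∂μ ≤ 1 + K^2 * ((C:ℝ)+1) := by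
        have h1 : ∫ ω, ‖f n ω‖ ∂μ ≤ ∫ ω, (1 + (f n ω)^2) ∂μ := by
          refine integral_mono (hfint n).norm ((integrable_const 1).add (hf2int n)) fun ω => ?_
          rw [Real.norm_eq_abs]
          nlinarith [sq_abs (f n ω), sq_nonneg (|f n ω| - 1), abs_nonneg (f n ω)]
        have h2 : ∫ ω, (1 + (f n ω)^2) ∂μ = 1 + ∫ ω, (f n ω)^2 ∂μ := by
          rw [integral_add (integrable_const 1) (hf2int n)]; simp
        rw [h2] at h1
        linarith [hL2 n]
      have heq : eLpNorm (f n) 1 μ = ENNReal.ofReal (∫ ω, ‖f n ω‖ ∂μ) := by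
        rw [eLpNorm_one_eq_lintegral_enorm, ← ofReal_integral_norm_eq_lintegral_enorm (hfint n)]
      rw [heq]
      exact ENNReal.ofReal_le_ofReal habs
    have hconv := hmart.submartingale.ae_tendsto_limitProcess hL1
    filter_upwards [hconv] with ω hω
    exact ⟨_, hω⟩
  filter_upwards [ae_all_iff.2 key] with ω hω hsum
  have hpart : ∀ k, ∑ j ∈ Finset.range k, (α j ω)^2 ≤ ((⌈∑' n, (α n ω)^2⌉₊ : ℕ) : ℝ) := by
    intro k
    refine le_trans (Summable.sum_le_tsum (Finset.range k) (fun j _ => sq_nonneg _) hsum) ?_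
    exact Nat.le_ceil _
  obtain ⟨L, hL⟩ := hω ⌈∑' n, (α n ω)^2⌉₊
  refine ⟨L, Tendsto.congr (fun n => ?_) hL⟩
  refine Finset.sum_congr rfl fun k _ => ?_
  rw [if_pos (hpart k)]


theorem positive_incurred_noise_tendsto_zero
    {Ω : Type} {m0 : MeasurableSpace Ω} (μ : Measure Ω) [IsProbabilityMeasure μ]
    (ℱ : Filtration ℕ m0)
    (α : ℕ → Ω → ℝ)
    (hα01 : ∀ n ω, α n ω ∈ Set.Icc (0 : ℝ) 1)
    (hαmeas : ∀ n, Measurable[ℱ n] (α n))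
    (hαdiv : ∀ᵐ ω ∂μ, Tendsto (fun N => ∑ n ∈ Finset.range N, α n ω) atTop atTop)
    (hαsq : ∀ᵐ ω ∂μ, Summable fun n => (α n ω) ^ 2)
    (w : ℕ → Ω → ℝ) (K : ℝ) (hK : 0 < K)
    (hwmeas : ∀ n, Measurable[ℱ (n + 1)] (w (n + 1)))
    (hwbd : ∀ n, ∀ᵐ ω ∂μ, |w (n + 1) ω| ≤ K)
    (hwzero : ∀ n, μ[w (n + 1) | ℱ n] =ᵐ[μ] 0)
    (W : ℕ → Ω → ℝ)
    (hW0 : ∀ ω, W 0 ω = 0)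
    (hWrec : ∀ n ω, W (n + 1) ω = max 0 ((1 - α n ω) * W n ω + α n ω * w (n + 1) ω)) :
    ∀ᵐ ω ∂μ, Tendsto (fun n => W n ω) atTop (nhds 0) := by
  have hMconv := pin_M_conv μ ℱ α hα01 hαmeas w K hK hwmeas hwbd hwzero
  filter_upwards [hMconv, hαdiv, hαsq] with ω hM hdiv hsq
  obtain ⟨L, hL⟩ := hM hsq
  set a : ℕ → ℝ := fun n => α n ω with hadef
  have h01 : ∀ n, a n ∈ Set.Icc (0:ℝ) 1 := fun n => hα01 n ω
  have hprod : ∀ m, Tendsto (fun n => ∏ i ∈ Finset.Ico m n, (1 - a i)) atTop (𝓝 0) :=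
    fun m => pin_prod_tendsto a h01 hdiv m
  set v : ℕ → ℝ := fun n => w (n+1) ω with hvdef
  set S : ℕ → ℝ := fun n => Nat.rec 0 (fun k Sk => (1 - a k) * Sk + a k * v k) n with hSdef
  have hSrec : ∀ n, S (n+1) = (1 - a n) * S n + a n * v n := fun n => rfl
  set Ms : ℕ → ℝ := fun n => ∑ k ∈ Finset.range n, a k * v k with hMsdef
  have hLm : Tendsto (fun n => Ms n - L) atTop (𝓝 0) := by
    simpa using hL.sub (tendsto_const_nhds (x := L))
  have hRrec : ∀ n, S (n+1) - (Ms (n+1) - L)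
      = (1 - a n) * (S n - (Ms n - L)) - a n * (Ms n - L) := by
    intro n
    have hMstep : Ms (n+1) = Ms n + a n * v n := Finset.sum_range_succ _ n
    rw [hSrec n, hMstep]; ring
  have hRabs : ∀ n, |S (n+1) - (Ms (n+1) - L)|
      ≤ (1 - a n) * |S n - (Ms n - L)| + a n * |Ms n - L| := by
    intro n
    rw [hRrec n]
    have h1 : 0 ≤ 1 - a n := by linarith [(h01 n).2]
    have h2 := (h01 n).1
    calc |(1 - a n) * (S n - (Ms n - L)) - a n * (Ms n - L)|
        ≤ |(1 - a n) * (S n - (Ms n - L))| + |a n * (Ms n - L)| := abs_sub _ _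
      _ = (1 - a n) * |S n - (Ms n - L)| + a n * |Ms n - L| := by
          rw [abs_mul, abs_mul, abs_of_nonneg h1, abs_of_nonneg h2]
  have hRtend : Tendsto (fun n => |S n - (Ms n - L)|) atTop (𝓝 0) :=
    pin_rec_tendsto a h01 hprod (fun n => Ms n - L) (fun n => |S n - (Ms n - L)|)
      (fun n => abs_nonneg _) hLm hRabs
  have hStend : Tendsto S atTop (𝓝 0) := by
    have hneg : Tendsto (fun n => -|S n - (Ms n - L)|) atTop (𝓝 0) := by
      simpa using hRtend.neg
    have h1 : Tendsto (fun n => S n - (Ms n - L)) atTop (𝓝 0) :=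
      tendsto_of_tendsto_of_tendsto_of_le_of_le hneg hRtend
        (fun n => neg_abs_le _) (fun n => le_abs_self _)
    simpa using h1.add hLm
  exact pin_W_tendsto a h01 hprod v S (fun n => W n ω) hSrec hStend (hW0 ω)
    (fun n => hWrec n ω)
end

section
/- In the regenerative optimal stopping model, for every t ≤ T the optimal value function V*_t(x, y) is nondecreasing with respect to the componentwise order on X × Y: if x ≤ x' and y^i ≤ y'^i for all i = 1,…,n−1, then V*_t(x, y) ≤ V*_t(x', y'). -/
/-- Next value of the asset: it depreciates by `e`, truncated at `0`. -/
def xDec (Xmax : ℕ) (x : Fin (Xmax + 1)) (e : ℕ) : Fin (Xmax + 1) :=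
  ⟨x.val - e, by have := x.isLt; omega⟩

/-- Next value of the external factors: factor `i` decrements by one if `B i`, truncated
at `0`. -/
def yDec {k : ℕ} (Ymax : Fin k → ℕ) (y : ∀ i, Fin (Ymax i + 1)) (B : Fin k → Bool) :
    ∀ i, Fin (Ymax i + 1) :=
  fun i => ⟨(y i).val - (if B i then 1 else 0), by have := (y i).isLt; omega⟩

/-- Contribution function of the regenerative optimal stopping problem: revenue `P` if the
asset has positive value, penalty `F` if it is worthless, and the replacement cost
`r(x, y)` is paid unless we wait (`a = false`) while the asset has positive value. -/
def stopContr {k : ℕ} (Xmax : ℕ) (Ymax : Fin k → ℕ) (P F : ℝ)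
    (r : Fin (Xmax + 1) → (∀ i, Fin (Ymax i + 1)) → ℝ)
    (x : Fin (Xmax + 1)) (y : ∀ i, Fin (Ymax i + 1)) (a : Bool) : ℝ :=
  P * (if 0 < x.val then 1 else 0) - F * (if x.val = 0 then 1 else 0)
    - r x y * (1 - (if a = false ∧ 0 < x.val then 1 else 0))

/-- Expected next-period value under the regenerative optimal stopping dynamics: if the
asset is replaced (`a = true`) or worthless, the system regenerates to `(Xmax, Ymax)`;
otherwise each factor `i` decrements by a Bernoulli(`p i`) amount and the asset value
depreciates by a uniform amount on `{1, …, emax}` with probability `f⁻(x, y)`. -/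
noncomputable def stopExpect {k : ℕ} (Xmax : ℕ) (Ymax : Fin k → ℕ) (emax : ℕ)
    (pB : Fin k → ℝ)
    (fm : Fin (Xmax + 1) → (∀ i, Fin (Ymax i + 1)) → ℝ)
    (Vt1 : Fin (Xmax + 1) → (∀ i, Fin (Ymax i + 1)) → ℝ)
    (x : Fin (Xmax + 1)) (y : ∀ i, Fin (Ymax i + 1)) (a : Bool) : ℝ :=
  if a = true ∨ x.val = 0 then Vt1 (Fin.last Xmax) (fun i => Fin.last (Ymax i))
  else
    ∑ B : Fin k → Bool,
      (∏ i, if B i then pB i else 1 - pB i) *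
        ((1 - fm x y) * Vt1 x (yDec Ymax y B) +
          fm x y * ((emax : ℝ)⁻¹ *
            ∑ e ∈ Finset.Icc 1 emax, Vt1 (xDec Xmax x e) (yDec Ymax y B)))

theorem regenerativeStopping_value_monotone
    (k : ℕ) (hk : 1 ≤ k) (T : ℕ) (hT : 1 ≤ T)
    (Xmax : ℕ) (hXmax : 1 ≤ Xmax) (Ymax : Fin k → ℕ) (hYmax : ∀ i, 1 ≤ Ymax i)
    (emax : ℕ) (hemax : 1 ≤ emax)
    (P F : ℝ) (hP : 0 < P) (hF : 0 < F)
    (pB : Fin k → ℝ) (hpB : ∀ i, pB i ∈ Set.Icc (0 : ℝ) 1)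
    (r : Fin (Xmax + 1) → (∀ i, Fin (Ymax i + 1)) → ℝ)
    (hr : ∀ x x' y y', x ≤ x' → (∀ i, y i ≤ y' i) → r x' y' ≤ r x y)
    (fm : Fin (Xmax + 1) → (∀ i, Fin (Ymax i + 1)) → ℝ)
    (hfm01 : ∀ x y, fm x y ∈ Set.Icc (0 : ℝ) 1)
    (hfm : ∀ x x' y y', x ≤ x' → (∀ i, y i ≤ y' i) → fm x' y' ≤ fm x y)
    (Vstar : ℕ → Fin (Xmax + 1) → (∀ i, Fin (Ymax i + 1)) → ℝ)
    (hVT : ∀ x y, Vstar T x y = 0)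
    (hVt : ∀ t, t < T → ∀ x y, Vstar t x y =
      max (stopContr Xmax Ymax P F r x y false +
            stopExpect Xmax Ymax emax pB fm (Vstar (t + 1)) x y false)
          (stopContr Xmax Ymax P F r x y true +
            stopExpect Xmax Ymax emax pB fm (Vstar (t + 1)) x y true)) :
    ∀ t ≤ T, ∀ x x' y y', x ≤ x' → (∀ i, y i ≤ y' i) → Vstar t x y ≤ Vstar t x' y' := by

  suffices H : ∀ d t, T - t ≤ d → t ≤ T → ∀ x x' y y', x ≤ x' → (∀ i, y i ≤ y' i) →
      Vstar t x y ≤ Vstar t x' y' by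
    exact fun t ht => H (T - t) t le_rfl ht
  intro d
  induction d with
  | zero =>
    intro t h ht x x' y y' _ _
    have : t = T := by omega
    subst this
    simp [hVT]
  | succ d ih =>
    intro t h ht x x' y y' hx hy
    rcases eq_or_lt_of_le ht with rfl | htT
    · simp [hVT]
    · have IH : ∀ x x' y y', x ≤ x' → (∀ i, y i ≤ y' i) →
          Vstar (t+1) x y ≤ Vstar (t+1) x' y' := fun a b c e hab hce =>
        ih (t+1) (by omega) (by omega) a b c e hab hce
      rw [hVt t htT, hVt t htT]
      have hxv : x.val ≤ x'.val := hx
      have hrle : r x' y' ≤ r x y := hr x x' y y' hx hy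
      set Vt1 := Vstar (t+1) with hVt1
      set Vtop := Vt1 (Fin.last Xmax) (fun i => Fin.last (Ymax i)) with hVtop
      -- indicator monotonicity
      have hind : (P * (if 0 < x.val then 1 else 0) - F * (if x.val = 0 then 1 else 0)) ≤
          (P * (if 0 < x'.val then 1 else 0) - F * (if x'.val = 0 then 1 else 0)) := by
        by_cases h0 : x.val = 0 <;> by_cases h0' : x'.val = 0 <;>
          simp [h0, h0', Nat.pos_of_ne_zero] <;> first | linarith | omega
      -- true action Q-values
      have hEt : ∀ (z : Fin (Xmax + 1)) (w : ∀ i, Fin (Ymax i + 1)),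
          stopExpect Xmax Ymax emax pB fm Vt1 z w true = Vtop := by
        intro z w; simp [stopExpect, hVtop]
      have hCt : ∀ (z : Fin (Xmax + 1)) (w : ∀ i, Fin (Ymax i + 1)),
          stopContr Xmax Ymax P F r z w true =
            P * (if 0 < z.val then 1 else 0) - F * (if z.val = 0 then 1 else 0) - r z w := by
        intro z w; simp [stopContr]
      have hQtrue : stopContr Xmax Ymax P F r x y true +
            stopExpect Xmax Ymax emax pB fm Vt1 x y true ≤
          stopContr Xmax Ymax P F r x' y' true +
            stopExpect Xmax Ymax emax pB fm Vt1 x' y' true := by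
        rw [hEt, hEt, hCt, hCt]; linarith
      apply max_le
      · -- false action at (x, y)
        by_cases h0 : x.val = 0
        · -- compare with the true action at (x', y')
          refine le_trans ?_ (le_max_right _ _)
          have hEf : stopExpect Xmax Ymax emax pB fm Vt1 x y false = Vtop := by
            simp [stopExpect, h0, hVtop]
          have hCf : stopContr Xmax Ymax P F r x y false = - F - r x y := by
            simp [stopContr, h0]
          rw [hEf, hCf, hEt, hCt]
          have : -F ≤ P * (if 0 < x'.val then 1 else 0) - F * (if x'.val = 0 then 1 else 0) := by
            by_cases h0' : x'.val = 0 <;> simp [h0', Nat.pos_of_ne_zero] <;> linarith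
          linarith
        · -- compare with the false action at (x', y')
          refine le_trans ?_ (le_max_left _ _)
          have h0' : ¬ x'.val = 0 := by omega
          have hxpos : 0 < x.val := Nat.pos_of_ne_zero h0
          have hxpos' : 0 < x'.val := Nat.pos_of_ne_zero h0'
          have hCf : ∀ (z : Fin (Xmax + 1)) (w : ∀ i, Fin (Ymax i + 1)), 0 < z.val →
              stopContr Xmax Ymax P F r z w false = P := by
            intro z w hz; simp [stopContr, hz, Nat.pos_iff_ne_zero.mp hz]
          rw [hCf x y hxpos, hCf x' y' hxpos']
          have hEf : stopExpect Xmax Ymax emax pB fm Vt1 x y false ≤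
              stopExpect Xmax Ymax emax pB fm Vt1 x' y' false := by
            rw [stopExpect, stopExpect, if_neg (by simp [h0]), if_neg (by simp [h0'])]
            apply Finset.sum_le_sum
            intro B _
            have hw : (0 : ℝ) ≤ ∏ i, if B i then pB i else 1 - pB i :=
              Finset.prod_nonneg fun i _ => by
                rcases hpB i with ⟨h1, h2⟩; split <;> linarith
            apply mul_le_mul_of_nonneg_left _ hw
            have hyB : ∀ i, (yDec Ymax y B) i ≤ (yDec Ymax y' B) i := by
              intro i
              have : (y i).val ≤ (y' i).val := hy i
              simp only [yDec, Fin.mk_le_mk]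
              omega
            have hA : Vt1 x (yDec Ymax y B) ≤ Vt1 x' (yDec Ymax y' B) := IH _ _ _ _ hx hyB
            have hBe : ∀ e, Vt1 (xDec Xmax x e) (yDec Ymax y B) ≤
                Vt1 (xDec Xmax x' e) (yDec Ymax y' B) := fun e =>
              IH _ _ _ _ (by simp only [xDec, Fin.mk_le_mk]; omega) hyB
            have hBe' : ∀ e, Vt1 (xDec Xmax x' e) (yDec Ymax y' B) ≤
                Vt1 x' (yDec Ymax y' B) := fun e =>
              IH _ _ _ _ (by simp only [xDec, Fin.le_def]; omega) (fun i => le_rfl)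
            set A := Vt1 x (yDec Ymax y B)
            set A' := Vt1 x' (yDec Ymax y' B)
            set S := ∑ e ∈ Finset.Icc 1 emax, Vt1 (xDec Xmax x e) (yDec Ymax y B) with hS
            set S' := ∑ e ∈ Finset.Icc 1 emax, Vt1 (xDec Xmax x' e) (yDec Ymax y' B) with hS'
            have hemaxpos : (0 : ℝ) < emax := by positivity
            have hSS : S ≤ S' := Finset.sum_le_sum fun e _ => hBe e
            have hS'le : S' ≤ emax * A' := by
              calc S' ≤ ∑ _e ∈ Finset.Icc 1 emax, A' :=
                    Finset.sum_le_sum fun e _ => hBe' e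
                _ = emax * A' := by
                    rw [Finset.sum_const, Nat.card_Icc]
                    simp [nsmul_eq_mul]
            have hBv : (emax : ℝ)⁻¹ * S ≤ (emax : ℝ)⁻¹ * S' :=
              mul_le_mul_of_nonneg_left hSS (by positivity)
            have hBv' : (emax : ℝ)⁻¹ * S' ≤ A' := by
              rw [inv_mul_le_iff₀ hemaxpos]; linarith
            have hf := hfm01 x y
            have hf' := hfm01 x' y'
            have hff : fm x' y' ≤ fm x y := hfm x x' y y' hx hy
            rcases hf with ⟨hf1, hf2⟩
            rcases hf' with ⟨hf1', hf2'⟩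
            nlinarith [mul_nonneg (by linarith : (0:ℝ) ≤ 1 - fm x y) (by linarith : (0:ℝ) ≤ A' - A),
              mul_nonneg hf1 (by linarith : (0:ℝ) ≤ (emax : ℝ)⁻¹ * S' - (emax : ℝ)⁻¹ * S),
              mul_nonneg (by linarith : (0:ℝ) ≤ fm x y - fm x' y')
                (by linarith : (0:ℝ) ≤ A' - (emax : ℝ)⁻¹ * S')]
          linarith
      · exact le_trans hQtrue (le_max_right _ _)
end

section
/- In the energy storage model, for every t ≤ T the optimal value function V*_t(r, e, p, d) is nondecreasing in each of r, e, p and d: if r ≤ r', e ≤ e', p ≤ p' and d ≤ d' (all states in the admissible hyperrectangle), then V*_t(r, e, p, d) ≤ V*_t(r', e', p', d'). -/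
/-- `clip v a b = min (max v a) b`. -/
def clip (v a b : ℤ) : ℤ := min (max v a) b

/-- The feasible set of allocation decisions `x = (x_ed, x_md, x_rd, x_er, x_rm)` in the
energy storage problem, for a state with storage level `r`, renewable supply `e`, and
demand `d`. -/
def storFeasible (Rmax γc γd : ℤ) (r e d : ℤ) (xed xmd xrd xer xrm : ℕ) : Prop :=
  (xed : ℤ) + xrd + xmd = d ∧
    (xrd : ℤ) + xrm ≤ r ∧
    (xer : ℤ) + xed ≤ e ∧
    (xrd : ℤ) + xrm ≤ γd ∧
    (xer : ℤ) ≤ min (Rmax - r) γc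

/-- Membership of a state `(r, e, p, d)` in the admissible hyperrectangle. -/
def storInBox (Rmax Emin Emax Pmin Pmax Dmin Dmax : ℤ) (r e p d : ℤ) : Prop :=
  0 ≤ r ∧ r ≤ Rmax ∧ Emin ≤ e ∧ e ≤ Emax ∧ Pmin ≤ p ∧ p ≤ Pmax ∧ Dmin ≤ d ∧ d ≤ Dmax

lemma clip_mono {a b v v' : ℤ} (h : v ≤ v') : clip v a b ≤ clip v' a b := by
  unfold clip; exact min_le_min (max_le_max h le_rfl) le_rfl

lemma clip_lb {a b : ℤ} (v : ℤ) (hab : a ≤ b) : a ≤ clip v a b :=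
  le_min (le_max_right _ _) hab

lemma clip_ub {a b : ℤ} (v : ℤ) : clip v a b ≤ b := min_le_right _ _

theorem energyStorage_value_monotone
    {W : Type} [Fintype W]
    (T : ℕ) (hT : 1 ≤ T)
    (Rmax Emin Emax Pmin Pmax Dmin Dmax γc γd : ℤ)
    (hR : 0 ≤ Rmax) (hE : 0 ≤ Emin) (hEE : Emin ≤ Emax) (hPq : 0 ≤ Pmin) (hPP : Pmin ≤ Pmax)
    (hD : 0 ≤ Dmin) (hDD : Dmin ≤ Dmax) (hγc : 0 ≤ γc) (hγd : 0 ≤ γd)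
    (q : ℕ → W → ℝ) (hq0 : ∀ t w, 0 ≤ q t w) (hq1 : ∀ t, ∑ w : W, q t w = 1)
    (Ehat Phat Dhat : ℕ → W → ℤ)
    (Vstar : ℕ → ℤ → ℤ → ℤ → ℤ → ℝ)
    (hVT : ∀ r e p d, storInBox Rmax Emin Emax Pmin Pmax Dmin Dmax r e p d →
      Vstar T r e p d = 0)
    (hVt : ∀ t, t < T → ∀ r e p d, storInBox Rmax Emin Emax Pmin Pmax Dmin Dmax r e p d →
      Vstar t r e p d =
        sSup {v : ℝ | ∃ xed xmd xrd xer xrm : ℕ,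
          storFeasible Rmax γc γd r e d xed xmd xrd xer xrm ∧
          v = (p : ℝ) * ((d : ℝ) + (xrm : ℝ) - (xmd : ℝ)) +
            ∑ w : W, q t w *
              Vstar (t + 1) (r + (xer : ℤ) - (xrd : ℤ) - (xrm : ℤ))
                (clip (e + Ehat t w) Emin Emax)
                (clip (p + Phat t w) Pmin Pmax)
                (clip (d + Dhat t w) Dmin Dmax)}) :
    ∀ t ≤ T, ∀ r e p d r' e' p' d',
      storInBox Rmax Emin Emax Pmin Pmax Dmin Dmax r e p d →
      storInBox Rmax Emin Emax Pmin Pmax Dmin Dmax r' e' p' d' →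
      r ≤ r' → e ≤ e' → p ≤ p' → d ≤ d' →
      Vstar t r e p d ≤ Vstar t r' e' p' d' := by
  -- the next state is in the box
  have next_box : ∀ (t' : ℕ) (w : W) (r0 e0 p0 d0 : ℤ) (xed xmd xrd xer xrm : ℕ),
      storInBox Rmax Emin Emax Pmin Pmax Dmin Dmax r0 e0 p0 d0 →
      storFeasible Rmax γc γd r0 e0 d0 xed xmd xrd xer xrm →
      storInBox Rmax Emin Emax Pmin Pmax Dmin Dmax
        (r0 + (xer : ℤ) - (xrd : ℤ) - (xrm : ℤ))
        (clip (e0 + Ehat t' w) Emin Emax)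
        (clip (p0 + Phat t' w) Pmin Pmax)
        (clip (d0 + Dhat t' w) Dmin Dmax) := by
    intro t' w r0 e0 p0 d0 xed xmd xrd xer xrm hb hf
    obtain ⟨h1, h2, h3, h4, h5⟩ := hf
    obtain ⟨b1, b2, b3, b4, b5, b6, b7, b8⟩ := hb
    exact ⟨by omega, by omega, clip_lb _ hEE, clip_ub _, clip_lb _ hPP, clip_ub _,
      clip_lb _ hDD, clip_ub _⟩
  have boxTop : storInBox Rmax Emin Emax Pmin Pmax Dmin Dmax Rmax Emax Pmax Dmax :=
    ⟨hR, le_rfl, hEE, le_rfl, hPP, le_rfl, hDD, le_rfl⟩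
  suffices h : ∀ n, ∀ t ≤ T, T - t = n → ∀ r e p d r' e' p' d',
      storInBox Rmax Emin Emax Pmin Pmax Dmin Dmax r e p d →
      storInBox Rmax Emin Emax Pmin Pmax Dmin Dmax r' e' p' d' →
      r ≤ r' → e ≤ e' → p ≤ p' → d ≤ d' →
      Vstar t r e p d ≤ Vstar t r' e' p' d' by
    intro t ht
    exact h (T - t) t ht rfl
  intro n
  induction n with
  | zero =>
    intro t ht htn r e p d r' e' p' d' hb hb' _ _ _ _
    have : t = T := by omega
    subst this
    rw [hVT _ _ _ _ hb, hVT _ _ _ _ hb']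
  | succ n ih =>
    intro t ht htn r e p d r' e' p' d' hb hb' hr he hp hd
    have htT : t < T := by omega
    have ih' : ∀ r e p d r' e' p' d',
        storInBox Rmax Emin Emax Pmin Pmax Dmin Dmax r e p d →
        storInBox Rmax Emin Emax Pmin Pmax Dmin Dmax r' e' p' d' →
        r ≤ r' → e ≤ e' → p ≤ p' → d ≤ d' →
        Vstar (t+1) r e p d ≤ Vstar (t+1) r' e' p' d' :=
      fun r e p d r' e' p' d' => ih (t+1) (by omega) (by omega) r e p d r' e' p' d'
    obtain ⟨b1, b2, b3, b4, b5, b6, b7, b8⟩ := hb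
    obtain ⟨c1, c2, c3, c4, c5, c6, c7, c8⟩ := hb'
    have hbb : storInBox Rmax Emin Emax Pmin Pmax Dmin Dmax r e p d :=
      ⟨b1, b2, b3, b4, b5, b6, b7, b8⟩
    have hbb' : storInBox Rmax Emin Emax Pmin Pmax Dmin Dmax r' e' p' d' :=
      ⟨c1, c2, c3, c4, c5, c6, c7, c8⟩
    rw [hVt t htT r e p d hbb, hVt t htT r' e' p' d' hbb']
    set S' : Set ℝ := {v : ℝ | ∃ xed xmd xrd xer xrm : ℕ,
          storFeasible Rmax γc γd r' e' d' xed xmd xrd xer xrm ∧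
          v = (p' : ℝ) * ((d' : ℝ) + (xrm : ℝ) - (xmd : ℝ)) +
            ∑ w : W, q t w *
              Vstar (t + 1) (r' + (xer : ℤ) - (xrd : ℤ) - (xrm : ℤ))
                (clip (e' + Ehat t w) Emin Emax)
                (clip (p' + Phat t w) Pmin Pmax)
                (clip (d' + Dhat t w) Dmin Dmax)} with hS'
    -- S' is bounded above
    have hbdd : BddAbove S' := by
      refine ⟨(Pmax : ℝ) * ((Dmax : ℝ) + (γd : ℝ)) + Vstar (t+1) Rmax Emax Pmax Dmax, ?_⟩
      rintro v ⟨xed, xmd, xrd, xer, xrm, hf, rfl⟩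
      obtain ⟨h1, h2, h3, h4, h5⟩ := hf
      have hcontrib : (p' : ℝ) * ((d' : ℝ) + (xrm : ℝ) - (xmd : ℝ))
          ≤ (Pmax : ℝ) * ((Dmax : ℝ) + (γd : ℝ)) := by
        have : (p' * (d' + (xrm : ℤ) - (xmd : ℤ)) : ℤ) ≤ Pmax * (Dmax + γd) := by
          have hA : (0 : ℤ) ≤ d' + (xrm : ℤ) - (xmd : ℤ) := by omega
          have hA2 : d' + (xrm : ℤ) - (xmd : ℤ) ≤ Dmax + γd := by omega
          exact mul_le_mul (by omega) hA2 hA (by omega)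
        calc (p' : ℝ) * ((d' : ℝ) + (xrm : ℝ) - (xmd : ℝ))
            = ((p' * (d' + (xrm : ℤ) - (xmd : ℤ)) : ℤ) : ℝ) := by push_cast; ring
          _ ≤ ((Pmax * (Dmax + γd) : ℤ) : ℝ) := by exact_mod_cast this
          _ = (Pmax : ℝ) * ((Dmax : ℝ) + (γd : ℝ)) := by push_cast; ring
      have hsum : ∑ w : W, q t w *
            Vstar (t + 1) (r' + (xer : ℤ) - (xrd : ℤ) - (xrm : ℤ))
              (clip (e' + Ehat t w) Emin Emax)
              (clip (p' + Phat t w) Pmin Pmax)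
              (clip (d' + Dhat t w) Dmin Dmax)
          ≤ Vstar (t+1) Rmax Emax Pmax Dmax := by
        have : ∑ w : W, q t w *
            Vstar (t + 1) (r' + (xer : ℤ) - (xrd : ℤ) - (xrm : ℤ))
              (clip (e' + Ehat t w) Emin Emax)
              (clip (p' + Phat t w) Pmin Pmax)
              (clip (d' + Dhat t w) Dmin Dmax)
            ≤ ∑ w : W, q t w * Vstar (t+1) Rmax Emax Pmax Dmax := by
          apply Finset.sum_le_sum
          intro w _
          apply mul_le_mul_of_nonneg_left _ (hq0 t w)
          have hnb := next_box t w r' e' p' d' xed xmd xrd xer xrm hbb' ⟨h1, h2, h3, h4, h5⟩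
          exact ih' _ _ _ _ _ _ _ _ hnb boxTop hnb.2.1 hnb.2.2.2.1 hnb.2.2.2.2.2.1
            hnb.2.2.2.2.2.2.2
        rw [← Finset.sum_mul, hq1 t, one_mul] at this
        exact this
      exact add_le_add hcontrib hsum
    -- now compare the two suprema
    have hne : Set.Nonempty {v : ℝ | ∃ xed xmd xrd xer xrm : ℕ,
          storFeasible Rmax γc γd r e d xed xmd xrd xer xrm ∧
          v = (p : ℝ) * ((d : ℝ) + (xrm : ℝ) - (xmd : ℝ)) +
            ∑ w : W, q t w *
              Vstar (t + 1) (r + (xer : ℤ) - (xrd : ℤ) - (xrm : ℤ))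
                (clip (e + Ehat t w) Emin Emax)
                (clip (p + Phat t w) Pmin Pmax)
                (clip (d + Dhat t w) Dmin Dmax)} := by
      refine ⟨_, 0, d.toNat, 0, 0, 0, ⟨by omega, by omega, by omega, by omega, by omega⟩, rfl⟩
    apply csSup_le hne
    rintro v ⟨xed, xmd, xrd, xer, xrm, hf, rfl⟩
    obtain ⟨h1, h2, h3, h4, h5⟩ := hf
    -- map the decision to a feasible decision at the larger state
    set xer' : ℕ := min xer (Rmax - r').toNat with hxer'
    set xmd' : ℕ := xmd + (d' - d).toNat with hxmd'
    have hf' : storFeasible Rmax γc γd r' e' d' xed xmd' xrd xer' xrm :=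
      ⟨by omega, by omega, by omega, by omega, by omega⟩
    refine le_trans ?_ (le_csSup hbdd ⟨xed, xmd', xrd, xer', xrm, hf', rfl⟩)
    -- compare the two values
    have hcontrib : (p : ℝ) * ((d : ℝ) + (xrm : ℝ) - (xmd : ℝ))
        ≤ (p' : ℝ) * ((d' : ℝ) + (xrm : ℝ) - (xmd' : ℝ)) := by
      have heq : (d' : ℝ) + (xrm : ℝ) - (xmd' : ℝ) = (d : ℝ) + (xrm : ℝ) - (xmd : ℝ) := by
        have hnat : ((d' - d).toNat : ℤ) = d' - d := by omega
        have hreal : (((d' - d).toNat : ℕ) : ℝ) = (d' : ℝ) - (d : ℝ) := by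
          exact_mod_cast hnat
        rw [hxmd']
        push_cast
        rw [hreal]
        ring
      rw [heq]
      have hA : (0 : ℝ) ≤ (d : ℝ) + (xrm : ℝ) - (xmd : ℝ) := by
        have : (0 : ℤ) ≤ d + (xrm : ℤ) - (xmd : ℤ) := by omega
        exact_mod_cast this
      exact mul_le_mul_of_nonneg_right (by exact_mod_cast hp) hA
    have hsum : ∑ w : W, q t w *
          Vstar (t + 1) (r + (xer : ℤ) - (xrd : ℤ) - (xrm : ℤ))
            (clip (e + Ehat t w) Emin Emax)
            (clip (p + Phat t w) Pmin Pmax)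
            (clip (d + Dhat t w) Dmin Dmax)
        ≤ ∑ w : W, q t w *
          Vstar (t + 1) (r' + (xer' : ℤ) - (xrd : ℤ) - (xrm : ℤ))
            (clip (e' + Ehat t w) Emin Emax)
            (clip (p' + Phat t w) Pmin Pmax)
            (clip (d' + Dhat t w) Dmin Dmax) := by
      apply Finset.sum_le_sum
      intro w _
      apply mul_le_mul_of_nonneg_left _ (hq0 t w)
      have hnb := next_box t w r e p d xed xmd xrd xer xrm hbb ⟨h1, h2, h3, h4, h5⟩
      have hnb' := next_box t w r' e' p' d' xed xmd' xrd xer' xrm hbb' hf'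
      exact ih' _ _ _ _ _ _ _ _ hnb hnb' (by omega)
        (clip_mono (by omega)) (clip_mono (by omega)) (clip_mono (by omega))
    exact add_le_add hcontrib hsum
end

section
/- Let V : S → ℝ be monotone, s^r ∈ S, z^r ∈ ℝ, and let V' : S → ℝ be any monotone function with V'(s^r) = z^r. Then the componentwise error of the projection is dominated by that of V': for every s ∈ S, |Π_M(s^r, z^r, V)(s) − V(s)| ≤ |V'(s) − V(s)|. -/
open scoped Classical

theorem projMono_pointwise_error_le {S : Type} [Fintype S] [PartialOrder S]
    (V : S → ℝ) (hV : Monotone V) (sr : S) (zr : ℝ)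
    (V' : S → ℝ) (hV' : Monotone V') (hV'sr : V' sr = zr) :
    ∀ s : S, |projMono sr zr V s - V s| ≤ |V' s - V s| := by
  intro s
  unfold projMono
  split_ifs with h1 h2 h3
  · subst h1; rw [hV'sr]
  · rcases le_total zr (V s) with h | h
    · simp [max_eq_right h]
    · have hz : V' s ≥ zr := hV'sr ▸ hV' h2
      clear h1 h2 hV hV' hV'sr
      rw [max_eq_left h, abs_of_nonneg (by linarith), abs_of_nonneg (by linarith)]
      linarith
  · rcases le_total (V s) zr with h | h
    · simp [min_eq_right h]
    · have hz : V' s ≤ zr := hV'sr ▸ hV' h3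
      clear h1 h2 h3 hV hV' hV'sr
      rw [min_eq_left h, abs_of_nonpos (by linarith), abs_of_nonpos (by linarith)]
      linarith
  · simp
end
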